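/- Let A and C be real symmetric positive semidefinite n×n matrices with A · C = 0, and let λ be a nonzero real number. Then λ is an eigenvalue of A + C if and only if λ is an eigenvalue of A or λ is an eigenvalue of C. -/
import Mathlib


open Matrix

/-- For real symmetric PSD matrices `A`, `C` with `A·C = 0`, a nonzero real `μ` is an
eigenvalue of `A + C` iff it is an eigenvalue of `A` or of `C`. -/
theorem eigenvalue_add_of_mul_eq_zero
    (n : ℕ) (A C : Matrix (Fin n) (Fin n) ℝ)
    (hA : A.PosSemidef) (hC : C.PosSemidef) (hAC : A * C = 0)
    (μ : ℝ) (hμ : μ ≠ 0) :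
    (∃ x : Fin n → ℝ, x ≠ 0 ∧ (A + C).mulVec x = μ • x) ↔
      (∃ x : Fin n → ℝ, x ≠ 0 ∧ A.mulVec x = μ • x) ∨
        (∃ x : Fin n → ℝ, x ≠ 0 ∧ C.mulVec x = μ • x) := by
  have hCA : C * A = 0 := by
    have := congrArg Matrix.conjTranspose hAC
    rwa [Matrix.conjTranspose_mul, hA.1, hC.1, Matrix.conjTranspose_zero] at this
  constructor
  · rintro ⟨x, hx, hsum⟩
    rw [Matrix.add_mulVec] at hsum
    by_cases hAx : A.mulVec x = 0
    · right
      refine ⟨x, hx, ?_⟩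
      rw [hAx, zero_add] at hsum
      exact hsum
    · left
      refine ⟨A.mulVec x, hAx, ?_⟩
      have := congrArg A.mulVec hsum
      simp only [Matrix.mulVec_add, Matrix.mulVec_mulVec, hAC, Matrix.zero_mulVec, add_zero,
        Matrix.mulVec_smul] at this
      rw [Matrix.mulVec_mulVec]
      exact this
  · rintro (⟨x, hx, hAx⟩ | ⟨x, hx, hCx⟩)
    · refine ⟨x, hx, ?_⟩
      have hCx : C.mulVec x = 0 := by
        have := congrArg C.mulVec hAx
        rw [Matrix.mulVec_mulVec, hCA, Matrix.zero_mulVec, Matrix.mulVec_smul] at this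
        have h2 : μ • C.mulVec x = 0 := this.symm
        simpa [hμ] using h2
      rw [Matrix.add_mulVec, hAx, hCx, add_zero]
    · refine ⟨x, hx, ?_⟩
      have hAx : A.mulVec x = 0 := by
        have := congrArg A.mulVec hCx
        rw [Matrix.mulVec_mulVec, hAC, Matrix.zero_mulVec, Matrix.mulVec_smul] at this
        have h2 : μ • A.mulVec x = 0 := this.symm
        simpa [hμ] using h2
      rw [Matrix.add_mulVec, hAx, hCx, zero_add]
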